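/- arXiv:1909.06578 — 2 statements merged into one kernel-verified Lean document; each statement's English description precedes it below -/
import Mathlib

section
/- If G is a bicyclic graph of odd order n, then the multiplicity of 2 as a Laplacian eigenvalue of G satisfies m_G(2) ≤ 2. Moreover, if both cycle lengths g₁ and g₂ of G are odd, then 2 is not an eigenvalue of L(G), i.e. m_G(2) = 0. -/
open scoped Classical
open Finset Matrix Polynomial
set_option linter.unusedSectionVars false
set_option maxHeartbeats 1600000

section BicyclicAux

variable {V : Type*} [Fintype V] [DecidableEq V]

lemma lapMatrix_map (G : SimpleGraph V) [DecidableRel G.Adj] {R S : Type*} [CommRing R]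
    [CommRing S] (f : R →+* S) : (G.lapMatrix R).map f = G.lapMatrix S := by
  ext i j
  simp only [Matrix.map_apply, SimpleGraph.lapMatrix, SimpleGraph.degMatrix,
    Matrix.sub_apply, Matrix.diagonal_apply, SimpleGraph.adjMatrix_apply]
  rw [map_sub]
  congr 1
  · split <;> simp
  · split <;> simp


/-- Walk parity: along a walk where adjacent vertices differ in `x`, endpoint values differ
by the length mod 2. -/
lemma walk_parity {H : SimpleGraph V} (x : V → ZMod 2)
    (hx : ∀ a b, H.Adj a b → x a + x b = 1) :
    ∀ {u v : V} (w : H.Walk u v), x v = x u + w.length := by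
  intro u v w
  induction w with
  | nil => simp
  | cons h p ih =>
    rename_i a b c
    have hab := hx a b h
    rw [ih]
    have : (x a : ZMod 2) = x b + 1 := by
      have := hab; revert this; generalize x a = s; generalize x b = t
      revert s t; decide
    rw [SimpleGraph.Walk.length_cons, this]
    push_cast
    have h2 : (1 : ZMod 2) + 1 = 0 := rfl
    linear_combination -h2

/-- An even-degree graph with at least one edge is not acyclic. -/
lemma not_isAcyclic_of_even_degree (H : SimpleGraph V)
    (hdeg : ∀ v, Even (H.degree v)) {a b : V} (hab : H.Adj a b) :
    ¬ H.IsAcyclic := by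
  intro hac
  have hbr : H.IsBridge s(a, b) :=
    (SimpleGraph.isAcyclic_iff_forall_adj_isBridge.mp hac) hab
  rw [SimpleGraph.isBridge_iff] at hbr
  set H' : SimpleGraph V := H \ SimpleGraph.fromEdgeSet {s(a, b)} with hH'
  have hnr : ¬ H'.Reachable a b := hbr
  set U : Finset V := Finset.univ.filter (fun w => H'.Reachable a w) with hU
  have haU : a ∈ U := by
    simp only [hU, Finset.mem_filter, Finset.mem_univ, true_and]
    exact SimpleGraph.Reachable.refl a
  have hbU : b ∉ U := by simp [hU]; exact hnr
  -- if w ∈ U, u ∉ U, H.Adj w u, then (w,u) = (a,b)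
  have hcross : ∀ w u, w ∈ U → u ∉ U → H.Adj w u → w = a ∧ u = b := by
    intro w u hw hu hadj
    by_cases he : s(w, u) = s(a, b)
    · rw [Sym2.eq_iff] at he
      rcases he with ⟨rfl, rfl⟩ | ⟨rfl, rfl⟩
      · exact ⟨rfl, rfl⟩
      · exact (hbU hw).elim
    · exfalso
      apply hu
      simp only [hU, Finset.mem_filter, Finset.mem_univ, true_and] at hw ⊢
      refine hw.trans ⟨SimpleGraph.Walk.cons ?_ SimpleGraph.Walk.nil⟩
      rw [hH']
      simp only [SimpleGraph.sdiff_adj, SimpleGraph.fromEdgeSet_adj]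
      constructor
      · exact hadj
      · intro hmem
        exact he hmem.1
  -- parity count
  have key : (0 : ZMod 2) = 1 := by
    have h1 : (0 : ZMod 2) = ∑ w ∈ U, (H.degree w : ZMod 2) := by
      symm
      apply Finset.sum_eq_zero
      intro w _
      obtain ⟨k, hk⟩ := hdeg w
      rw [hk]; push_cast; exact CharTwo.add_self_eq_zero _
    have h2 : ∀ w, (H.degree w : ZMod 2) = ∑ u : V, if H.Adj w u then (1 : ZMod 2) else 0 :=
      fun w => SimpleGraph.degree_eq_sum_if_adj H w
    rw [h1]
    have h3 : ∑ w ∈ U, (H.degree w : ZMod 2)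
        = (∑ w ∈ U, ∑ u ∈ U, if H.Adj w u then (1 : ZMod 2) else 0)
          + ∑ w ∈ U, ∑ u ∈ Uᶜ, if H.Adj w u then (1 : ZMod 2) else 0 := by
      simp_rw [h2]
      rw [← Finset.sum_add_distrib]
      congr 1
      ext w
      rw [Finset.sum_add_sum_compl]
    have h4 : (∑ w ∈ U, ∑ u ∈ U, if H.Adj w u then (1 : ZMod 2) else 0) = 0 := by
      rw [← Finset.sum_product']
      apply Finset.sum_involution (fun p _ => (p.2, p.1))
      · intro p hp
        by_cases h : H.Adj p.1 p.2
        · simp [h, h.symm]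
          decide
        · have h' : ¬ H.Adj p.2 p.1 := fun hh => h hh.symm
          simp [h, h']
      · intro p hp hf
        intro hpp
        have h1 : p.2 = p.1 := congrArg Prod.fst hpp
        by_cases h : H.Adj p.1 p.2
        · exact H.irrefl (h1 ▸ h)
        · simp [h] at hf
      · intro p hp
        simp only [Finset.mem_product] at hp ⊢
        exact ⟨hp.2, hp.1⟩
      · intro p hp
        rfl
    have h5 : (∑ w ∈ U, ∑ u ∈ Uᶜ, if H.Adj w u then (1 : ZMod 2) else 0) = 1 := by
      rw [← Finset.sum_product']
      rw [← Finset.sum_filter]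
      have : ((U ×ˢ Uᶜ).filter (fun p => H.Adj p.1 p.2)) = {(a, b)} := by
        ext p
        simp only [Finset.mem_filter, Finset.mem_product, Finset.mem_singleton, Finset.mem_compl]
        constructor
        · rintro ⟨⟨hw, hu⟩, hadj⟩
          obtain ⟨h1, h2⟩ := hcross p.1 p.2 hw hu hadj
          exact Prod.ext h1 h2
        · rintro rfl
          exact ⟨⟨haU, hbU⟩, hab⟩
      rw [this]
      simp
    rw [h3, h4, h5, zero_add]
  exact absurd key (by decide)


lemma ker_lap_two (G : SimpleGraph V) [DecidableRel G.Adj] (hconn : G.Connected)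
    (hcyc : ∀ (v : V) (w : G.Walk v v), w.IsCycle → Odd w.length)
    (x : V → ZMod 2) (hx : G.lapMatrix (ZMod 2) *ᵥ x = 0) :
    x = 0 ∨ x = fun _ => (1 : ZMod 2) := by
  have zfact : ∀ a b : ZMod 2, a + b = if a ≠ b then 1 else 0 := by decide
  have hlap : ∀ v, ∑ u ∈ G.neighborFinset v, (x v + x u) = 0 := by
    intro v
    have h0 : (G.lapMatrix (ZMod 2) *ᵥ x) v = 0 := by rw [hx]; rfl
    rw [SimpleGraph.lapMatrix_mulVec_apply] at h0
    have hdeg : (G.degree v : ZMod 2) * x v = ∑ u ∈ G.neighborFinset v, x v := by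
      rw [Finset.sum_const, ← SimpleGraph.card_neighborFinset_eq_degree]
      rw [nsmul_eq_mul]
    rw [Finset.sum_add_distrib, ← hdeg]
    rw [sub_eq_zero] at h0
    rw [h0]
    exact CharTwo.add_self_eq_zero _
  have Hsymm : Symmetric (fun a b => G.Adj a b ∧ x a ≠ x b) :=
    fun a b h => ⟨h.1.symm, h.2.symm⟩
  have Hirr : Irreflexive (fun a b => G.Adj a b ∧ x a ≠ x b) :=
    fun a h => h.2 rfl
  set H : SimpleGraph V := ⟨fun a b => G.Adj a b ∧ x a ≠ x b, ⟨fun a b h => Hsymm h⟩, ⟨Hirr⟩⟩ with hH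
  have hHadj : ∀ a b, H.Adj a b ↔ (G.Adj a b ∧ x a ≠ x b) := fun a b => Iff.rfl
  have hHdeg : ∀ v, Even (H.degree v) := by
    intro v
    have hc : (H.degree v : ZMod 2) = 0 := by
      rw [SimpleGraph.degree_eq_sum_if_adj]
      have : ∀ u : V, (if H.Adj v u then (1 : ZMod 2) else 0)
          = if G.Adj v u then (x v + x u) else 0 := by
        intro u
        by_cases hg : G.Adj v u
        · simp only [hHadj, hg, true_and, if_true]
          rw [zfact]
        · simp [hHadj, hg]
      rw [Finset.sum_congr rfl (fun u _ => this u)]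
      rw [← Finset.sum_filter]
      rw [← hlap v]
      congr 1
      ext u
      simp [SimpleGraph.mem_neighborFinset]
    rw [ZMod.natCast_eq_zero_iff] at hc
    exact (even_iff_two_dvd).mpr hc
  by_cases hHe : ∃ a b, H.Adj a b
  · obtain ⟨a, b, hab⟩ := hHe
    have hnac := not_isAcyclic_of_even_degree H
      (fun v => by convert hHdeg v using 2) hab
    rw [SimpleGraph.IsAcyclic] at hnac
    push_neg at hnac
    obtain ⟨v, c, hc⟩ := hnac
    have hHG : H ≤ G := fun a b h => h.1
    have hc' : (c.mapLe hHG).IsCycle := hc.mapLe hHG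
    have hodd := hcyc v (c.mapLe hHG) hc'
    rw [SimpleGraph.Walk.length_map] at hodd
    have hpar := walk_parity x (fun a b (h : H.Adj a b) => by
      rw [zfact]; simp [h.2]) c
    have hlen : ((c.length : ZMod 2)) = 0 := left_eq_add.mp hpar
    rw [ZMod.natCast_eq_zero_iff] at hlen
    rw [← Nat.not_even_iff_odd] at hodd

    exact (hodd ((even_iff_two_dvd).mpr hlen)).elim
  · push_neg at hHe
    have hconst : ∀ a b, G.Adj a b → x a = x b := by
      intro a b hg
      by_contra hne
      exact hHe a b ⟨hg, hne⟩
    have hreach : ∀ u v : V, G.Reachable u v → x u = x v := by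
      intro u v ⟨w⟩
      induction w with
      | nil => rfl
      | cons h p ih => exact (hconst _ _ h).trans ih
    have hne : Nonempty V := hconn.nonempty
    obtain ⟨v0⟩ := hne
    have hxc : ∀ u, x u = x v0 := fun u => hreach u v0 (hconn.preconnected u v0)
    have : x v0 = 0 ∨ x v0 = 1 := by
      have : ∀ a : ZMod 2, a = 0 ∨ a = 1 := by decide
      exact this _
    rcases this with h | h
    · left; funext u; rw [hxc u, h]; rfl
    · right; funext u; rw [hxc u, h]


lemma det_lap_int (G : SimpleGraph V) [DecidableRel G.Adj] [Nonempty V] :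
    (G.lapMatrix ℤ).det = 0 := by
  have h1 : (G.lapMatrix ℚ).det = 0 := by
    rw [← Matrix.exists_mulVec_eq_zero_iff]
    refine ⟨fun _ => 1, ?_, SimpleGraph.lapMatrix_mulVec_const_eq_zero G⟩
    intro h
    obtain ⟨v⟩ := ‹Nonempty V›
    have := congr_fun h v
    norm_num at this
  have h2 : ((Int.castRingHom ℚ) (G.lapMatrix ℤ).det) = (G.lapMatrix ℚ).det := by
    rw [RingHom.map_det, RingHom.mapMatrix_apply, lapMatrix_map]
  rw [h1] at h2
  have h3 : (((G.lapMatrix ℤ).det : ℤ) : ℚ) = 0 := h2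
  exact_mod_cast h3

lemma row_single_det (G : SimpleGraph V) [DecidableRel G.Adj]
    (hker : ∀ x : V → ZMod 2, G.lapMatrix (ZMod 2) *ᵥ x = 0 → x = 0 ∨ x = fun _ => (1 : ZMod 2))
    (v : V) :
    ((G.lapMatrix (ZMod 2)).updateRow v (Pi.single v 1)).det = 1 := by
  set L := G.lapMatrix (ZMod 2) with hL
  set M := L.updateRow v (Pi.single v 1) with hM
  have hdet : M.det ≠ 0 := by
    intro h0
    rw [← Matrix.exists_mulVec_eq_zero_iff] at h0
    obtain ⟨y, hy0, hy⟩ := h0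
    have happ : ∀ u, (M *ᵥ y) u = 0 := fun u => by rw [hy]; rfl
    have hv : y v = 0 := by
      have := happ v
      rwa [Matrix.mulVec, hM, Matrix.updateRow_self, single_dotProduct, one_mul] at this
    have hne : ∀ u, u ≠ v → (L *ᵥ y) u = 0 := by
      intro u hu
      have := happ u
      rwa [Matrix.mulVec, hM, Matrix.updateRow_ne hu] at this
    have hsum : ∑ u : V, (L *ᵥ y) u = 0 := by
      have hcol : ∀ w : V, ∑ u : V, L u w = 0 := by
        intro w
        have hrow : ∑ u : V, L w u = 0 := by
          have := congr_fun (SimpleGraph.lapMatrix_mulVec_const_eq_zero (R := ZMod 2) G) w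
          simpa [Matrix.mulVec, dotProduct] using this
        rw [← hrow]
        apply Finset.sum_congr rfl
        intro u _
        have hs := congr_fun (congr_fun (G.isSymm_lapMatrix (R := ZMod 2)).eq u) w
        rw [Matrix.transpose_apply] at hs
        exact hs.symm
      calc ∑ u : V, (L *ᵥ y) u = ∑ u : V, ∑ w : V, L u w * y w := rfl
        _ = ∑ w : V, (∑ u : V, L u w) * y w := by
            rw [Finset.sum_comm]
            simp_rw [Finset.sum_mul]
        _ = 0 := by simp [hcol]
    have hvv : (L *ᵥ y) v = 0 := by
      rw [Finset.sum_eq_single v (fun u _ hu => hne u hu) (fun h => absurd (Finset.mem_univ v) h)]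
        at hsum
      exact hsum
    have hker' : L *ᵥ y = 0 := by
      funext u
      by_cases hu : u = v
      · rw [hu]; exact hvv
      · exact hne u hu
    rcases hker y hker' with h | h
    · exact hy0 h
    · rw [h] at hv; simp at hv
  have : ∀ a : ZMod 2, a ≠ 0 → a = 1 := by decide
  exact this _ hdet

lemma updateRow_map' {R S : Type*} [CommRing R] [CommRing S] (M : Matrix V V R)
    (f : R →+* S) (v : V) (r : V → R) :
    (M.updateRow v r).map f = (M.map f).updateRow v (fun i => f (r i)) := by
  ext i j
  by_cases h : i = v <;> simp [h, Matrix.updateRow_apply]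

lemma core_det_int (G : SimpleGraph V) [DecidableRel G.Adj] (hodd : Odd (Fintype.card V))
    (hker : ∀ x : V → ZMod 2, G.lapMatrix (ZMod 2) *ᵥ x = 0 → x = 0 ∨ x = fun _ => (1 : ZMod 2)) :
    ((2 : ℤ) • (1 : Matrix V V ℤ) - G.lapMatrix ℤ).det ≠ 0 := by
  haveI : Nonempty V := by
    rw [← Fintype.card_pos_iff]
    have := hodd
    rcases Nat.eq_zero_or_pos (Fintype.card V) with h | h
    · rw [h] at this; norm_num at this
    · exact h
  intro hdet0
  set L4 := G.lapMatrix (ZMod 4) with hL4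
  set A : Matrix V V (ZMod 4) := -L4 with hA
  set B : Matrix V V (ZMod 4) := (2 : ZMod 4) • (1 : Matrix V V (ZMod 4)) with hB
  -- cast the integer determinant to ZMod 4
  have hcast : ((2 : ZMod 4) • (1 : Matrix V V (ZMod 4)) - L4).det = 0 := by
    have h1 : (((2 : ℤ) • (1 : Matrix V V ℤ) - G.lapMatrix ℤ).map (Int.castRingHom (ZMod 4)))
        = (2 : ZMod 4) • (1 : Matrix V V (ZMod 4)) - L4 := by
      ext i j
      simp only [Matrix.map_apply, Matrix.sub_apply, Matrix.smul_apply, Matrix.one_apply,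
        smul_eq_mul]
      rw [map_sub]
      congr 1
      · split <;> simp
      · exact congr_fun (congr_fun (lapMatrix_map G (Int.castRingHom (ZMod 4))) i) j
    rw [← h1, ← RingHom.mapMatrix_apply, ← RingHom.map_det, hdet0, map_zero]
  have hdetL4 : L4.det = 0 := by
    have h2 : ((Int.castRingHom (ZMod 4)) (G.lapMatrix ℤ).det) = L4.det := by
      rw [RingHom.map_det, RingHom.mapMatrix_apply, lapMatrix_map]
    rw [det_lap_int G] at h2
    rw [← h2, map_zero]
  -- determinant of L2 with updated row
  have hrow2 : ∀ v : V, ((G.lapMatrix (ZMod 2)).updateRow v (Pi.single v 1)).det = 1 :=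
    row_single_det G hker
  -- the updated-row determinant over ZMod 4 maps to 1 over ZMod 2
  have hψ : ∀ v : V,
      (ZMod.castHom (by norm_num : (2:ℕ) ∣ 4) (ZMod 2)) ((L4.updateRow v (Pi.single v 1)).det)
        = 1 := by
    intro v
    set ψ := ZMod.castHom (by norm_num : (2:ℕ) ∣ 4) (ZMod 2) with hψdef
    rw [RingHom.map_det, RingHom.mapMatrix_apply, updateRow_map']
    have h3 : (L4.map ψ) = G.lapMatrix (ZMod 2) := lapMatrix_map G ψ
    have h4 : (fun i => ψ ((Pi.single v (1 : ZMod 4) : V → ZMod 4) i))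
        = (Pi.single v (1 : ZMod 2) : V → ZMod 2) := by
      funext i
      by_cases h : i = v <;> simp [h, Pi.single_apply]
    rw [h3, h4]
    exact hrow2 v
  -- expansion of the determinant
  have hM4 : (2 : ZMod 4) • (1 : Matrix V V (ZMod 4)) - L4 = B + A := by
    rw [hB, hA, sub_eq_add_neg]
  have hexp : ((2 : ZMod 4) • (1 : Matrix V V (ZMod 4)) - L4).det
      = ∑ s : Finset V, Matrix.detRowAlternating (s.piecewise B A) := by
    rw [hM4]
    exact (Matrix.detRowAlternating (R := ZMod 4) (n := V)).toMultilinearMap.map_add_univ B A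
  -- evaluate each term
  have hFval : ∀ s : Finset V, Matrix.detRowAlternating (s.piecewise B A)
      = if s.card = 1 then 2 else 0 := by
    intro s
    by_cases h0 : s = ∅
    · subst h0
      erw [Finset.piecewise_empty]
      have : Matrix.detRowAlternating (R := ZMod 4) (n := V) A = A.det := rfl
      rw [this, hA, Matrix.det_neg, hdetL4]
      simp
    by_cases h1 : s.card = 1
    · obtain ⟨v, rfl⟩ := Finset.card_eq_one.mp h1
      erw [Finset.piecewise_singleton]
      have heq : Matrix.detRowAlternating (R := ZMod 4) (n := V)
          (Function.update (A : V → V → ZMod 4) v (B v)) = (A.updateRow v (B v)).det := rfl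
      rw [heq]
      have hrowB : B v = (2 : ZMod 4) • (Pi.single v (1 : ZMod 4) : V → ZMod 4) := by
        funext j
        by_cases h : j = v
        · subst h; simp [hB, Matrix.smul_apply, Matrix.one_apply, Pi.single_apply]
        · simp [hB, h, Ne.symm h, Matrix.smul_apply, Matrix.one_apply, Pi.single_apply]
      rw [hrowB, Matrix.det_updateRow_smul]
      have hAup : A.updateRow v (Pi.single v (1 : ZMod 4) : V → ZMod 4)
          = -(L4.updateRow v (-(Pi.single v (1 : ZMod 4) : V → ZMod 4))) := by
        ext i j
        by_cases h : i = v <;> simp [h, Matrix.updateRow_apply, hA]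
      rw [hAup, Matrix.det_neg]
      have hneg1 : (-(Pi.single v (1 : ZMod 4) : V → ZMod 4))
          = (-1 : ZMod 4) • (Pi.single v (1 : ZMod 4) : V → ZMod 4) := by
        simp
      rw [hneg1, Matrix.det_updateRow_smul]
      rw [Odd.neg_one_pow hodd]
      have h2d : ∀ d : ZMod 4,
          (ZMod.castHom (by norm_num : (2:ℕ) ∣ 4) (ZMod 2)) d = 1 →
          2 * (-1 * (-1 * d)) = 2 := by decide
      rw [if_pos h1]
      exact h2d _ (hψ v)
    · -- s.card ≥ 2
      have hcard0 : s.card ≠ 0 := fun h => h0 (Finset.card_eq_zero.mp h)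
      have h2le : 1 < s.card := by omega
      obtain ⟨u, hu, w, hw, huw⟩ := Finset.one_lt_card.mp h2le
      rw [if_neg h1]
      set M' : Matrix V V (ZMod 4) := Matrix.of (s.piecewise B A) with hM'
      have heq : Matrix.detRowAlternating (R := ZMod 4) (n := V) (s.piecewise B A)
          = M'.det := rfl
      rw [heq]
      have hMu : M' u = (2 : ZMod 4) • ((1 : Matrix V V (ZMod 4)) u) := by
        have : M' u = B u := by
          simp only [hM', Matrix.of_apply]
          exact Finset.piecewise_eq_of_mem s _ _ hu
        rw [this, hB]
        rfl
      have step1 : M'.det = 2 * (M'.updateRow u ((1 : Matrix V V (ZMod 4)) u)).det := by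
        conv_lhs => rw [← Matrix.updateRow_eq_self M' u]
        rw [hMu, Matrix.det_updateRow_smul]
      set N := M'.updateRow u ((1 : Matrix V V (ZMod 4)) u) with hN
      have hNw : N w = (2 : ZMod 4) • ((1 : Matrix V V (ZMod 4)) w) := by
        rw [hN, Matrix.updateRow_ne (Ne.symm huw)]
        have : M' w = B w := by
          simp only [hM', Matrix.of_apply]
          exact Finset.piecewise_eq_of_mem s _ _ hw
        rw [this, hB]
        rfl
      have step2 : N.det = 2 * (N.updateRow w ((1 : Matrix V V (ZMod 4)) w)).det := by
        conv_lhs => rw [← Matrix.updateRow_eq_self N w]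
        rw [hNw, Matrix.det_updateRow_smul]
      rw [step1, step2, ← mul_assoc]
      have h40 : (2 : ZMod 4) * 2 = 0 := by decide
      rw [h40, zero_mul]
  -- sum up
  have hsum : ∑ s : Finset V, Matrix.detRowAlternating (s.piecewise B A) = 2 := by
    rw [Finset.sum_congr rfl (fun s _ => hFval s)]
    rw [← Finset.sum_filter]
    have himg : (Finset.univ : Finset (Finset V)).filter (fun s => s.card = 1)
        = Finset.univ.image (fun v : V => ({v} : Finset V)) := by
      ext s
      simp only [Finset.mem_filter, Finset.mem_univ, true_and, Finset.mem_image,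
        Finset.card_eq_one]
      constructor
      · rintro ⟨a, rfl⟩; exact ⟨a, rfl⟩
      · rintro ⟨a, rfl⟩; exact ⟨a, rfl⟩
    rw [himg, Finset.sum_image (fun a _ b _ h => Finset.singleton_injective h)]
    rw [Finset.sum_const, Finset.card_univ, nsmul_eq_mul]
    obtain ⟨k, hk⟩ := hodd
    rw [hk]
    push_cast
    have h4 : (4 : ZMod 4) = 0 := by decide
    linear_combination (k : ZMod 4) * h4
  rw [hexp, hsum] at hcast
  exact absurd hcast (by decide)


lemma two_sub_lap_map (G : SimpleGraph V) [DecidableRel G.Adj] {S : Type*} [CommRing S] :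
    (((2 : ℤ) • (1 : Matrix V V ℤ) - G.lapMatrix ℤ).map (Int.castRingHom S))
      = (2 : S) • (1 : Matrix V V S) - G.lapMatrix S := by
  ext i j
  simp only [Matrix.map_apply, Matrix.sub_apply, Matrix.smul_apply, Matrix.one_apply,
    smul_eq_mul]
  rw [map_sub]
  congr 1
  · split <;> simp
  · exact congr_fun (congr_fun (lapMatrix_map G (Int.castRingHom S)) i) j

lemma core_det_real (G : SimpleGraph V) [DecidableRel G.Adj] (hodd : Odd (Fintype.card V))
    (hker : ∀ x : V → ZMod 2, G.lapMatrix (ZMod 2) *ᵥ x = 0 → x = 0 ∨ x = fun _ => (1 : ZMod 2)) :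
    ((2 : ℝ) • (1 : Matrix V V ℝ) - G.lapMatrix ℝ).det ≠ 0 := by
  have h := core_det_int G hodd hker
  intro h0
  apply h
  have h1 : ((Int.castRingHom ℝ) ((2 : ℤ) • (1 : Matrix V V ℤ) - G.lapMatrix ℤ).det)
      = ((2 : ℝ) • (1 : Matrix V V ℝ) - G.lapMatrix ℝ).det := by
    rw [RingHom.map_det, RingHom.mapMatrix_apply, two_sub_lap_map]
  rw [h0] at h1
  have h2 : ((((2 : ℤ) • (1 : Matrix V V ℤ) - G.lapMatrix ℤ).det : ℤ) : ℝ) = 0 := h1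
  exact_mod_cast h2

lemma eval_two_charpoly (G : SimpleGraph V) [DecidableRel G.Adj] :
    ((G.lapMatrix ℝ).charpoly).eval 2 = ((2 : ℝ) • (1 : Matrix V V ℝ) - G.lapMatrix ℝ).det := by
  rw [Matrix.charpoly, ← Polynomial.coe_evalRingHom, RingHom.map_det, RingHom.mapMatrix_apply]
  congr 1
  ext i j
  by_cases h : i = j <;>
    simp [h, Matrix.charmatrix_apply, Matrix.diagonal_apply, Matrix.one_apply,
      Matrix.smul_apply, Matrix.map_apply]


lemma connected_deleteEdges_of_not_isBridge {G : SimpleGraph V} (hconn : G.Connected)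
    {a b : V} (hab : G.Adj a b) (hnb : ¬ G.IsBridge s(a, b)) :
    (G.deleteEdges {s(a, b)}).Connected := by
  rw [SimpleGraph.isBridge_iff] at hnb
  push_neg at hnb
  have hr : (G \ SimpleGraph.fromEdgeSet {s(a, b)}).Reachable a b := hnb
  have hdel : G.deleteEdges {s(a, b)} = G \ SimpleGraph.fromEdgeSet {s(a, b)} := rfl
  rw [hdel]
  have hpre : ∀ u v : V, G.Reachable u v → (G \ SimpleGraph.fromEdgeSet {s(a, b)}).Reachable u v := by
    intro u v ⟨w⟩
    induction w with
    | nil => exact SimpleGraph.Reachable.refl _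
    | cons h p ih =>
      rename_i x y z
      refine SimpleGraph.Reachable.trans ?_ ih
      by_cases he : s(x, y) = s(a, b)
      · rw [Sym2.eq_iff] at he
        rcases he with ⟨rfl, rfl⟩ | ⟨rfl, rfl⟩
        · exact hr
        · exact hr.symm
      · refine ⟨SimpleGraph.Walk.cons ?_ SimpleGraph.Walk.nil⟩
        simp only [SimpleGraph.sdiff_adj, SimpleGraph.fromEdgeSet_adj]
        exact ⟨h, fun hmem => he hmem.1⟩
  haveI : Nonempty V := hconn.nonempty
  exact SimpleGraph.Connected.mk (fun u v => hpre u v (hconn.preconnected u v))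

lemma exists_tree_deletion :
    ∀ (k : ℕ) (G : SimpleGraph V), G.Connected → G.edgeFinset.card = k →
      ∃ D : Finset (Sym2 V), (↑D ⊆ G.edgeSet) ∧ (G.deleteEdges ↑D).IsTree ∧
        (Fintype.card V - 1) + D.card = k := by
  intro k
  induction k using Nat.strong_induction_on with
  | _ k ih =>
    intro G hconn hcard
    by_cases hac : G.IsAcyclic
    · refine ⟨∅, by simp, ?_, ?_⟩
      · rw [Finset.coe_empty, SimpleGraph.deleteEdges_empty]
        exact ⟨hconn, hac⟩
      · have ht : G.IsTree := ⟨hconn, hac⟩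
        have := ht.card_edgeFinset
        simp only [Finset.card_empty, add_zero]
        omega
    · rw [SimpleGraph.isAcyclic_iff_forall_adj_isBridge] at hac
      push_neg at hac
      obtain ⟨a, b, hab, hnb⟩ := hac
      set G' := G.deleteEdges {s(a, b)} with hG'
      have hconn' : G'.Connected := by
        have : ({s(a, b)} : Set (Sym2 V)) = (↑({s(a, b)} : Finset (Sym2 V)) : Set (Sym2 V)) := by
          simp
        exact connected_deleteEdges_of_not_isBridge hconn hab hnb
      have hcard' : G'.edgeFinset.card = k - 1 := by
        have hset : G' = G.deleteEdges (↑({s(a, b)} : Finset (Sym2 V))) := by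
          rw [hG']; congr 1; simp
        rw [show G'.edgeFinset = G.edgeFinset \ {s(a, b)} by
          ext e; simp [hG', SimpleGraph.mem_edgeFinset]]
        rw [Finset.card_sdiff_of_subset (by simp [SimpleGraph.mem_edgeFinset, hab])]
        rw [hcard]
        simp
      have hk1 : k - 1 < k := by
        have : s(a, b) ∈ G.edgeFinset := by simp [SimpleGraph.mem_edgeFinset, hab]
        have : 0 < G.edgeFinset.card := Finset.card_pos.mpr ⟨_, this⟩
        omega
      obtain ⟨D', hD'sub, hD'tree, hD'card⟩ := ih (k - 1) hk1 G' hconn' (by convert hcard')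
      refine ⟨insert s(a, b) D', ?_, ?_, ?_⟩
      · intro e he
        simp only [Finset.coe_insert, Set.mem_insert_iff] at he
        rcases he with rfl | he
        · exact hab
        · exact (SimpleGraph.edgeSet_subset_edgeSet.mpr (SimpleGraph.deleteEdges_le _))
            (hD'sub he)
      · have : G.deleteEdges ↑(insert s(a, b) D') = G'.deleteEdges ↑D' := by
          rw [hG', SimpleGraph.deleteEdges_deleteEdges]
          congr 1
          simp only [Finset.coe_insert]
          rw [Set.union_comm]
          ext e
          simp [or_comm]
        rw [this]
        exact hD'tree
      · have hnotmem : s(a, b) ∉ D' := by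
          intro hmem
          have := hD'sub hmem
          rw [hG', SimpleGraph.edgeSet_deleteEdges] at this
          simp at this
        rw [Finset.card_insert_of_notMem hnotmem]
        omega

lemma lap_deleteEdges_mulVec (G : SimpleGraph V) [DecidableRel G.Adj] (D : Finset (Sym2 V))
    (x : V → ℝ) (hx : ∀ e ∈ D, ∀ u v : V, e = s(u, v) → x u = x v) :
    (G.deleteEdges ↑D).lapMatrix ℝ *ᵥ x = G.lapMatrix ℝ *ᵥ x := by
  funext v
  rw [SimpleGraph.lapMatrix_mulVec_apply, SimpleGraph.lapMatrix_mulVec_apply]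
  have hdegsum : ∀ (H : SimpleGraph V) (inst : DecidableRel H.Adj),
      (H.degree v : ℝ) * x v - ∑ u ∈ H.neighborFinset v, x u
        = ∑ u ∈ H.neighborFinset v, (x v - x u) := by
    intro H inst
    rw [Finset.sum_sub_distrib, Finset.sum_const, ← SimpleGraph.card_neighborFinset_eq_degree,
      nsmul_eq_mul]
  rw [hdegsum _ _, hdegsum _ _]
  apply Finset.sum_subset
  · intro u hu
    rw [SimpleGraph.mem_neighborFinset] at hu ⊢
    exact SimpleGraph.deleteEdges_le _ hu
  · intro u hu hnu
    rw [SimpleGraph.mem_neighborFinset] at hu hnu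
    rw [SimpleGraph.deleteEdges_adj] at hnu
    push_neg at hnu
    have hmem : s(v, u) ∈ D := by
      by_contra hq
      exact hq (hnu hu)
    rw [hx _ hmem v u rfl]
    ring


lemma charpoly_conj {R : Type*} [CommRing R] (U D W : Matrix V V R)
    (hUW : U * W = 1) : (U * D * W).charpoly = D.charpoly := by
  unfold Matrix.charpoly
  have hkey : (U * D * W).charmatrix
      = ((C : R →+* R[X]).mapMatrix U) * D.charmatrix * ((C : R →+* R[X]).mapMatrix W) := by
    unfold Matrix.charmatrix
    rw [mul_sub, sub_mul]
    congr 1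
    · have hcomm := Matrix.scalar_commute (n := V) (X : R[X])
        (fun r' => Commute.all _ _) ((C : R →+* R[X]).mapMatrix U)
      rw [← hcomm.eq]
      rw [mul_assoc, ← _root_.map_mul, hUW, _root_.map_one, mul_one]
    · rw [← _root_.map_mul, ← _root_.map_mul]
  rw [hkey, Matrix.det_mul, Matrix.det_mul]
  have : ((C : R →+* R[X]).mapMatrix U).det * ((C : R →+* R[X]).mapMatrix W).det = 1 := by
    rw [← Matrix.det_mul, ← _root_.map_mul, hUW, _root_.map_one, Matrix.det_one]
  calc ((C : R →+* R[X]).mapMatrix U).det * D.charmatrix.det * ((C : R →+* R[X]).mapMatrix W).det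
      = D.charmatrix.det * (((C : R →+* R[X]).mapMatrix U).det
          * ((C : R →+* R[X]).mapMatrix W).det) := by ring
    _ = D.charmatrix.det := by rw [this, mul_one]

lemma charpoly_diagonal {R : Type*} [CommRing R] (d : V → R) :
    (Matrix.diagonal d).charpoly = ∏ i : V, (X - C (d i)) := by
  unfold Matrix.charpoly
  have : (Matrix.diagonal d).charmatrix = Matrix.diagonal (fun i => (X : R[X]) - C (d i)) := by
    ext i j
    by_cases h : i = j
    · subst h; rw [Matrix.charmatrix_apply]; simp
    · rw [Matrix.charmatrix_apply]; simp [Matrix.diagonal_apply_ne _ h]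
  rw [this, Matrix.det_diagonal]

lemma charpoly_hermitian (A : Matrix V V ℝ) (hA : A.IsHermitian) :
    A.charpoly = ∏ i : V, (X - C (hA.eigenvalues i)) := by
  have hsp := hA.spectral_theorem
  have hU : (hA.eigenvectorUnitary : Matrix V V ℝ) * (star (hA.eigenvectorUnitary : Matrix V V ℝ))
      = 1 := Matrix.mem_unitaryGroup_iff.mp hA.eigenvectorUnitary.2
  have hd : Matrix.diagonal ((RCLike.ofReal : ℝ → ℝ) ∘ hA.eigenvalues)
      = Matrix.diagonal hA.eigenvalues := by
    congr 1
  calc A.charpoly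
      = ((hA.eigenvectorUnitary : Matrix V V ℝ) * Matrix.diagonal hA.eigenvalues
          * (star (hA.eigenvectorUnitary : Matrix V V ℝ))).charpoly := by
        conv_lhs => rw [hsp]
        rw [hd]
        simp only [Unitary.conjStarAlgAut_apply, Unitary.coe_star]
    _ = (Matrix.diagonal hA.eigenvalues).charpoly := charpoly_conj _ _ _ hU
    _ = ∏ i : V, (X - C (hA.eigenvalues i)) := _root_.charpoly_diagonal _

lemma rootMult_eq_card (A : Matrix V V ℝ) (hA : A.IsHermitian) (μ : ℝ) :
    A.charpoly.rootMultiplicity μ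
      = (Finset.univ.filter (fun i => hA.eigenvalues i = μ)).card := by
  rw [← Polynomial.count_roots, charpoly_hermitian A hA]
  have : (∏ i : V, (X - C (hA.eigenvalues i)))
      = ((Finset.univ.val.map hA.eigenvalues).map (fun a => X - C a)).prod := by
    rw [Multiset.map_map]
    rfl
  rw [this, Polynomial.roots_multiset_prod_X_sub_C]
  rw [Multiset.count_map]
  have hcard : (Finset.univ.filter (fun i => hA.eigenvalues i = μ)).card
      = Multiset.card (Multiset.filter (fun i => hA.eigenvalues i = μ) Finset.univ.val) := by
    rw [Finset.card, Finset.filter_val]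
  rw [hcard]
  exact congrArg _ (Multiset.filter_congr (fun a _ => by rw [eq_comm]))

end BicyclicAux
/-- For a bicyclic graph `G` of odd order, the multiplicity of the Laplacian
eigenvalue `2` is at most `2`; moreover, if every cycle of `G` has odd length (in particular
both cycle lengths `g₁, g₂` are odd), then `2` is not a Laplacian eigenvalue of `G`. -/
theorem bicyclic_odd_order_multiplicity_two
    {V : Type*} [Fintype V] [DecidableEq V]
    (G : SimpleGraph V) (hconn : G.Connected)
    (hbi : G.edgeFinset.card = Fintype.card V + 1)
    (hodd : Odd (Fintype.card V)) :
    (Matrix.charpoly (G.lapMatrix ℝ)).rootMultiplicity 2 ≤ 2 ∧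
      ((∀ (v : V) (w : G.Walk v v), w.IsCycle → Odd w.length) →
        (Matrix.charpoly (G.lapMatrix ℝ)).rootMultiplicity 2 = 0) := by
  haveI : Nonempty V := hconn.nonempty
  have hA : (G.lapMatrix ℝ).IsHermitian := (SimpleGraph.posSemidef_lapMatrix ℝ G).1
  constructor
  · -- multiplicity at most 2
    by_contra hgt
    push_neg at hgt
    -- spanning tree via deletion of two edges
    obtain ⟨D, hDsub, hDtree, hDcard⟩ :=
      exists_tree_deletion (Fintype.card V + 1) G hconn hbi
    have hcV : 1 ≤ Fintype.card V := Fintype.card_pos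
    have hD2 : D.card = 2 := by omega
    set T := G.deleteEdges ↑D with hT
    have hTconn : T.Connected := hDtree.isConnected
    have hTker : ∀ x : V → ZMod 2, T.lapMatrix (ZMod 2) *ᵥ x = 0 →
        x = 0 ∨ x = fun _ => (1 : ZMod 2) :=
      ker_lap_two T hTconn (fun v w hc => (hDtree.IsAcyclic w hc).elim)
    have hTdet : ((2 : ℝ) • (1 : Matrix V V ℝ) - T.lapMatrix ℝ).det ≠ 0 :=
      core_det_real T hodd hTker
    -- three eigenvectors with eigenvalue 2
    have hcount : 2 < (Finset.univ.filter (fun i => hA.eigenvalues i = 2)).card := by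
      rw [← rootMult_eq_card _ hA 2]
      exact hgt
    obtain ⟨S, hSsub, hS3⟩ := Finset.exists_subset_card_eq
      (show 3 ≤ (Finset.univ.filter (fun i => hA.eigenvalues i = 2)).card by omega)
    obtain ⟨i1, i2, i3, h12, h13, h23, rfl⟩ := Finset.card_eq_three.mp hS3
    set idx : Fin 3 → V := ![i1, i2, i3] with hidx
    have hinj : Function.Injective idx := by
      intro a b hab
      fin_cases a <;> fin_cases b <;>
        simp only [hidx, Matrix.cons_val_zero, Matrix.cons_val_one, Matrix.head_cons,
          Matrix.cons_val_succ] at hab ⊢ <;>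
        first
          | rfl
          | exact absurd hab (by assumption)
          | exact absurd hab.symm (by assumption)
    have heig : ∀ k : Fin 3, hA.eigenvalues (idx k) = 2 := by
      intro k
      have hmem : idx k ∈ ({i1, i2, i3} : Finset V) := by
        fin_cases k <;>
          simp [hidx, Matrix.cons_val_zero, Matrix.cons_val_one, Matrix.head_cons,
            Matrix.cons_val_succ]
      have := hSsub hmem
      simp only [Finset.mem_filter] at this
      exact this.2
    set vk : Fin 3 → (V → ℝ) :=
      fun k => (WithLp.equiv 2 (V → ℝ)) (hA.eigenvectorBasis (idx k)) with hvk
    have hmulv : ∀ k : Fin 3, G.lapMatrix ℝ *ᵥ (vk k) = (2 : ℝ) • (vk k) := by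
      intro k
      have := hA.mulVec_eigenvectorBasis (idx k)
      rw [heig k] at this
      exact this
    have hlin : LinearIndependent ℝ vk := by
      have h0 : LinearIndependent ℝ (⇑(hA.eigenvectorBasis) ∘ idx) :=
        (hA.eigenvectorBasis.orthonormal.linearIndependent).comp idx hinj
      exact h0.map' _ (WithLp.linearEquiv 2 ℝ (V → ℝ)).ker
    -- project to the two difference coordinates
    obtain ⟨e1, e2, he12, hDeq⟩ := Finset.card_eq_two.mp hD2
    induction e1 using Sym2.ind with | _ a1 b1 => ?_
    induction e2 using Sym2.ind with | _ a2 b2 => ?_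
    set φv : (V → ℝ) → (Fin 2 → ℝ) := fun x => ![x a1 - x b1, x a2 - x b2] with hφv
    have hnli : ¬ LinearIndependent ℝ (fun k : Fin 3 => φv (vk k)) := by
      intro hli
      have hle := hli.fintype_card_le_finrank
      rw [Module.finrank_pi] at hle
      simp at hle
    obtain ⟨g, hgsum, k0, hgk0⟩ := Fintype.not_linearIndependent_iff.mp hnli
    set xx : V → ℝ := ∑ k : Fin 3, g k • vk k with hxx
    have hxx_eig : G.lapMatrix ℝ *ᵥ xx = (2 : ℝ) • xx := by
      rw [hxx]
      have : G.lapMatrix ℝ *ᵥ (∑ k : Fin 3, g k • vk k)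
          = ∑ k : Fin 3, g k • (G.lapMatrix ℝ *ᵥ vk k) := by
        rw [← Matrix.mulVecLin_apply]
        rw [map_sum]
        apply Finset.sum_congr rfl
        intro k _
        rw [LinearMap.map_smul, Matrix.mulVecLin_apply]
      rw [this]
      rw [Finset.smul_sum]
      apply Finset.sum_congr rfl
      intro k _
      rw [hmulv k, smul_comm]
    have hsum0 : ∀ j : Fin 2, ∑ k : Fin 3, g k * (φv (vk k)) j = 0 := by
      intro j
      have := congr_fun hgsum j
      rw [Finset.sum_apply] at this
      simpa using this
    have hdiff : ∀ (p q : V), (∀ k : Fin 3, (φv (vk k)) 0 = vk k p - vk k q ∨ True) → True :=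
      fun _ _ _ => trivial
    have hxxd1 : xx a1 = xx b1 := by
      have h0 := hsum0 0
      simp only [hφv, Matrix.cons_val_zero] at h0
      rw [hxx]
      rw [Finset.sum_apply, Finset.sum_apply]
      rw [← sub_eq_zero, ← Finset.sum_sub_distrib]
      rw [← h0]
      apply Finset.sum_congr rfl
      intro k _
      simp [mul_sub]
    have hxxd2 : xx a2 = xx b2 := by
      have h0 := hsum0 1
      simp only [hφv, Matrix.cons_val_one, Matrix.head_cons] at h0
      rw [hxx]
      rw [Finset.sum_apply, Finset.sum_apply]
      rw [← sub_eq_zero, ← Finset.sum_sub_distrib]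
      rw [← h0]
      apply Finset.sum_congr rfl
      intro k _
      simp [mul_sub]
    have hxcond : ∀ e ∈ D, ∀ u v : V, e = s(u, v) → xx u = xx v := by
      intro e he u v hev
      rw [hDeq] at he
      simp only [Finset.mem_insert, Finset.mem_singleton] at he
      rcases he with rfl | rfl
      · rw [Sym2.eq_iff] at hev
        rcases hev with ⟨rfl, rfl⟩ | ⟨rfl, rfl⟩
        · exact hxxd1
        · exact hxxd1.symm
      · rw [Sym2.eq_iff] at hev
        rcases hev with ⟨rfl, rfl⟩ | ⟨rfl, rfl⟩
        · exact hxxd2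
        · exact hxxd2.symm
    have hTeig : T.lapMatrix ℝ *ᵥ xx = (2 : ℝ) • xx := by
      convert (lap_deleteEdges_mulVec G D xx hxcond).trans hxx_eig
    have hker0 : ((2 : ℝ) • (1 : Matrix V V ℝ) - T.lapMatrix ℝ) *ᵥ xx = 0 := by
      rw [Matrix.sub_mulVec, Matrix.smul_mulVec, Matrix.one_mulVec, hTeig]
      simp
    have hxxne : xx ≠ 0 := by
      intro h0
      rw [hxx] at h0
      have := (Fintype.linearIndependent_iff.mp hlin) g h0 k0
      exact hgk0 this
    exact hTdet (Matrix.exists_mulVec_eq_zero_iff.mp ⟨xx, hxxne, hker0⟩)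
  · -- all cycles odd : multiplicity zero
    intro hcyc
    apply Polynomial.rootMultiplicity_eq_zero
    intro hroot
    have hker := ker_lap_two G hconn hcyc
    have hdet := core_det_real G hodd hker
    apply hdet
    rw [← eval_two_charpoly]
    exact hroot
end

section
/- Let G₁ and G₂ be broken sun graphs with no perfect matching whose cycle lengths satisfy g₁ ≡ 0 (mod 4) and g₂ ≡ 0 (mod 4), and such that in each graph, between any pair of consecutive vertices of degree 3 along the cycle there is an odd number of vertices of degree 2. Then for any one-edge connection G = G₁ ⊙ G₂, the Laplacian L(G) has 2 as an eigenvalue. -/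
open scoped Classical

/-- The one-edge connection `G₁ ⊙ G₂`. -/
def oneEdgeConn {V₁ V₂ : Type*} (G₁ : SimpleGraph V₁) (G₂ : SimpleGraph V₂)
    (u : V₁) (v : V₂) : SimpleGraph (V₁ ⊕ V₂) :=
  SimpleGraph.fromRel (fun x y =>
    match x, y with
    | Sum.inl a, Sum.inl b => G₁.Adj a b
    | Sum.inr a, Sum.inr b => G₂.Adj a b
    | Sum.inl a, Sum.inr b => a = u ∧ b = v
    | Sum.inr _, Sum.inl _ => False)

/-- `G` is a broken sun graph presented by the cycle `c : Fin g → V` (with pendants attached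
to some cycle vertices, at most one per cycle vertex). -/
def IsBrokenSunOn {V : Type*} (G : SimpleGraph V) (g : ℕ) (hg : 3 ≤ g) (c : Fin g → V) : Prop :=
  Function.Injective c ∧
    (∀ i j : Fin g, G.Adj (c i) (c j) ↔
      (j = i + (⟨1, by omega⟩ : Fin g) ∨ i = j + (⟨1, by omega⟩ : Fin g))) ∧
    (∀ v : V, v ∉ Set.range c → ∃! w : V, G.Adj v w) ∧
    (∀ v : V, v ∉ Set.range c → ∀ w : V, G.Adj v w → w ∈ Set.range c) ∧
    (∀ i : Fin g, ∀ v w : V, v ∉ Set.range c → w ∉ Set.range c →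
      G.Adj v (c i) → G.Adj w (c i) → v = w)

/-- Along the cycle `c : Fin g → V` of a broken sun graph, between any two consecutive
vertices of degree `3` there is an odd number of vertices of degree `2`. -/
def OddGapCondition {V : Type*} [Fintype V] (G : SimpleGraph V) [DecidableRel G.Adj]
    (g : ℕ) (hg : 3 ≤ g) (c : Fin g → V) : Prop :=
  ∀ (i : Fin g) (m : ℕ) (hm : m + 1 ≤ g),
    G.degree (c i) = 3 →
    G.degree (c ⟨((i : ℕ) + m + 1) % g, Nat.mod_lt _ (by omega)⟩) = 3 →
    (∀ k < m, G.degree (c ⟨((i : ℕ) + k + 1) % g, Nat.mod_lt _ (by omega)⟩) = 2) →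
    Odd m

open Matrix

noncomputable def bsSign (n : ℕ) : ℝ :=
  if n % 4 = 0 then 1 else if n % 4 = 2 then -1 else 0

lemma bsSign_congr {a b : ℕ} (h : a % 4 = b % 4) : bsSign a = bsSign b := by
  unfold bsSign; rw [h]

lemma bsSign_add_two (n : ℕ) : bsSign n + bsSign (n + 2) = 0 := by
  unfold bsSign
  have h : n % 4 = 0 ∨ n % 4 = 1 ∨ n % 4 = 2 ∨ n % 4 = 3 := by omega
  rcases h with h | h | h | h <;>
    rw [show (n + 2) % 4 = (n % 4 + 2) % 4 from by omega, h] <;> norm_num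

lemma bsSign_odd {n : ℕ} (h : n % 2 = 1) : bsSign n = 0 := by
  unfold bsSign
  rw [if_neg (by omega), if_neg (by omega)]

lemma lap_mulVec_eq {V : Type*} [Fintype V] [DecidableEq V] (G : SimpleGraph V) [DecidableRel G.Adj]
    (X : V → ℝ) (x : V) :
    (G.lapMatrix ℝ *ᵥ X) x = ∑ y, (if G.Adj x y then X x - X y else 0) := by
  rw [SimpleGraph.lapMatrix_mulVec_apply, ← Finset.sum_filter,
    ← SimpleGraph.neighborFinset_eq_filter, Finset.sum_sub_distrib, Finset.sum_const]
  rw [SimpleGraph.degree, nsmul_eq_mul]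

lemma brokenSun_exists_eigen {V : Type*} [Fintype V] [DecidableEq V]
    (G : SimpleGraph V) [DecidableRel G.Adj]
    (g : ℕ) (hg : 3 ≤ g) (c : Fin g → V)
    (hbs : IsBrokenSunOn G g hg c) (hg4 : g % 4 = 0)
    (hgap : OddGapCondition G g hg c) :
    ∃ X : V → ℝ, X ≠ 0 ∧
      ∀ x : V, (∑ y, if G.Adj x y then X x - X y else 0) = 2 * X x := by
  haveI : NeZero g := ⟨by omega⟩
  obtain ⟨hinj, hadj, hpend, hpendr, huniq⟩ := hbs
  set one : Fin g := ⟨1, by omega⟩ with hone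
  have hdvd : (4:ℕ) ∣ g := Nat.dvd_of_mod_eq_zero hg4
  have hsub_add : ∀ i : Fin g, (i - one) + one = i := fun i => sub_add_cancel i one
  have hval_add : ∀ i : Fin g, ((i + one : Fin g) : ℕ) = ((i:ℕ) + 1) % g := by
    intro i; rw [Fin.val_add]
  have hprev : ∀ i : Fin g, (((i - one : Fin g) : ℕ) + 1) % g = (i:ℕ) := by
    intro i; conv_rhs => rw [← hsub_add i]
    rw [hval_add]
  have hAdjNext : ∀ i : Fin g, G.Adj (c i) (c (i + one)) := fun i =>
    (hadj i (i + one)).mpr (Or.inl rfl)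
  have hAdjPrev : ∀ i : Fin g, G.Adj (c i) (c (i - one)) := fun i =>
    (hadj i (i - one)).mpr (Or.inr (hsub_add i).symm)
  have hne2 : ∀ i : Fin g, (i + one : Fin g) ≠ i - one := by
    intro i h
    have h2 : i = i + (one + one) := by
      rw [← add_assoc, h, hsub_add]
    have h3 : one + one = 0 := (left_eq_add.mp h2)
    have h4 : ((one + one : Fin g) : ℕ) = 2 % g := by
      rw [Fin.val_add]
      have e : (one : ℕ) = 1 := rfl
      rw [e]
    rw [h3] at h4
    rw [Nat.mod_eq_of_lt (by omega)] at h4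
    simp at h4
  -- pendant predicate
  have hcne : ∀ i : Fin g, c (i + one) ≠ c (i - one) := fun i h => hne2 i (hinj h)
  have hpne : ∀ p, p ∉ Set.range c → ∀ j : Fin g, p ≠ c j := fun p hp j h => hp ⟨j, h.symm⟩
  have hnb : ∀ i : Fin g, ∀ y, G.Adj (c i) y ↔
      (y = c (i + one) ∨ y = c (i - one) ∨ (y ∉ Set.range c ∧ G.Adj y (c i))) := by
    intro i y
    constructor
    · intro h
      by_cases hy : y ∈ Set.range c
      · obtain ⟨j, rfl⟩ := hy
        rcases (hadj i j).mp h with h1 | h1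
        · exact Or.inl (by rw [h1])
        · refine Or.inr (Or.inl ?_)
          rw [h1, add_sub_cancel_right]
      · exact Or.inr (Or.inr ⟨hy, h.symm⟩)
    · rintro (rfl | rfl | ⟨hy, h⟩)
      · exact hAdjNext i
      · exact hAdjPrev i
      · exact h.symm
  have hnb2 : ∀ i : Fin g, (¬ ∃ p, p ∉ Set.range c ∧ G.Adj p (c i)) →
      G.neighborFinset (c i) = {c (i + one), c (i - one)} := by
    intro i hp
    ext y
    rw [SimpleGraph.mem_neighborFinset, hnb i y]
    simp only [Finset.mem_insert, Finset.mem_singleton]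
    constructor
    · rintro (h | h | ⟨h1, h2⟩)
      exacts [Or.inl h, Or.inr h, absurd ⟨y, h1, h2⟩ hp]
    · rintro (h | h)
      exacts [Or.inl h, Or.inr (Or.inl h)]
  have hnb3 : ∀ i : Fin g, ∀ p, p ∉ Set.range c → G.Adj p (c i) →
      G.neighborFinset (c i) = insert p {c (i + one), c (i - one)} := by
    intro i p hp hadjp
    ext y
    rw [SimpleGraph.mem_neighborFinset, hnb i y]
    simp only [Finset.mem_insert, Finset.mem_singleton]
    constructor
    · rintro (h | h | ⟨h1, h2⟩)
      exacts [Or.inr (Or.inl h), Or.inr (Or.inr h), Or.inl (huniq i y p h1 hp h2 hadjp)]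
    · rintro (rfl | h | h)
      exacts [Or.inr (Or.inr ⟨hp, hadjp⟩), Or.inl h, Or.inr (Or.inl h)]
  have hdeg2 : ∀ i : Fin g, (¬ ∃ p, p ∉ Set.range c ∧ G.Adj p (c i)) → G.degree (c i) = 2 := by
    intro i hp
    rw [SimpleGraph.degree, hnb2 i hp,
      Finset.card_insert_of_notMem (by simp [hcne i]), Finset.card_singleton]
  have hdeg3 : ∀ i : Fin g, (∃ p, p ∉ Set.range c ∧ G.Adj p (c i)) → G.degree (c i) = 3 := by
    rintro i ⟨p, hp, ha⟩
    rw [SimpleGraph.degree, hnb3 i p hp ha,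
      Finset.card_insert_of_notMem (by simp [hpne p hp]),
      Finset.card_insert_of_notMem (by simp [hcne i]), Finset.card_singleton]
  have hdeg3' : ∀ i : Fin g, G.degree (c i) = 3 → (∃ p, p ∉ Set.range c ∧ G.Adj p (c i)) := by
    intro i h
    by_contra hp
    rw [hdeg2 i hp] at h
    omega
  have hdeg23 : ∀ j : Fin g, G.degree (c j) = 2 ∨ G.degree (c j) = 3 := by
    intro j
    by_cases h : ∃ p, p ∉ Set.range c ∧ G.Adj p (c j)
    · exact Or.inr (hdeg3 _ h)
    · exact Or.inl (hdeg2 _ h)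
  -- the cycle indexing function
  have hgpos : 0 < g := by omega
  set cy : ℕ → Fin g := fun n => ⟨n % g, Nat.mod_lt _ hgpos⟩ with hcydef
  have hcy : ∀ a b : ℕ, a % g = b % g → cy a = cy b := fun a b h => Fin.ext (by simpa [hcydef] using h)
  have hcyval : ∀ n : ℕ, ((cy n : Fin g) : ℕ) = n % g := fun n => rfl
  -- chain lemma
  have hchain : ∀ n : ℕ, ∀ i : Fin g, n < g → G.degree (c i) = 3 →
      G.degree (c (cy ((i : ℕ) + n))) = 3 → Even n := by
    intro n
    induction n using Nat.strong_induction_on with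
    | _ n IH =>
      intro i hn h3 h3'
      rcases Nat.eq_zero_or_pos n with rfl | hpos
      · exact Even.zero
      · have hex : ∃ k, k ≤ n - 1 ∧ G.degree (c (cy ((i : ℕ) + k + 1))) = 3 := by
          refine ⟨n - 1, le_rfl, ?_⟩
          rw [show (i : ℕ) + (n - 1) + 1 = (i : ℕ) + n from by omega]
          exact h3'
        set k₀ := Nat.find hex with hk₀def
        obtain ⟨hk₀le, hk₀deg⟩ := Nat.find_spec hex
        have hmin : ∀ k, k < k₀ → G.degree (c (cy ((i : ℕ) + k + 1))) = 2 := by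
          intro k hk
          have h1 := Nat.find_min hex hk
          have h2 : k ≤ n - 1 := by omega
          rcases hdeg23 (cy ((i:ℕ)+k+1)) with h | h
          · exact h
          · exact absurd ⟨h2, h⟩ h1
        have hodd : Odd k₀ := by
          refine hgap i k₀ (by omega) h3 ?_ ?_
          · exact hk₀deg
          · intro k hk
            exact hmin k hk
        have hrest : G.degree (c (cy (((cy ((i:ℕ) + k₀ + 1) : Fin g) : ℕ) + (n - (k₀ + 1))))) = 3 := by
          have he : (((cy ((i:ℕ) + k₀ + 1) : Fin g) : ℕ) + (n - (k₀ + 1))) % g = ((i:ℕ) + n) % g := by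
            rw [hcyval, Nat.mod_add_mod]
            congr 1
            omega
          rw [hcy _ _ he]
          exact h3'
        have heven : Even (n - (k₀ + 1)) := by
          refine IH (n - (k₀ + 1)) (by omega) (cy ((i:ℕ) + k₀ + 1)) (by omega) hk₀deg hrest
        obtain ⟨a, ha⟩ := hodd
        obtain ⟨b, hb⟩ := heven
        exact ⟨a + 1 + b, by omega⟩
  -- parity of pendant positions
  have hparity : ∀ i j : Fin g, G.degree (c i) = 3 → G.degree (c j) = 3 →
      (i : ℕ) % 2 = (j : ℕ) % 2 := by
    intro i j hi hj
    set n := (((j : ℕ) + g) - (i : ℕ)) % g with hndef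
    have hn : n < g := Nat.mod_lt _ hgpos
    have hkey : ((i : ℕ) + n) % g = (j : ℕ) := by
      rw [hndef, Nat.add_mod_mod,
        show (i : ℕ) + (((j : ℕ) + g) - (i : ℕ)) = (j : ℕ) + g from by
          have := i.isLt; omega,
        Nat.add_mod_right, Nat.mod_eq_of_lt j.isLt]
    have h3' : G.degree (c (cy ((i : ℕ) + n))) = 3 := by
      rw [show cy ((i:ℕ) + n) = j from Fin.ext (by rw [hcyval, hkey])]
      exact hj
    have heven := hchain n i hn hi h3'
    obtain ⟨a, ha⟩ := heven
    have hdm := Nat.div_add_mod ((i : ℕ) + n) g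
    rw [hkey] at hdm
    obtain ⟨m4, hm4⟩ := hdvd
    obtain ⟨e, he⟩ : Even (g * (((i : ℕ) + n) / g)) := by
      refine Even.mul_right ⟨2 * m4, by omega⟩ _
    omega
  -- choose the shift t
  obtain ⟨t, ht⟩ : ∃ t : ℕ, ∀ i : Fin g, (∃ p, p ∉ Set.range c ∧ G.Adj p (c i)) →
      ((i : ℕ) + t) % 2 = 1 := by
    by_cases hP : ∃ i : Fin g, ∃ p, p ∉ Set.range c ∧ G.Adj p (c i)
    · obtain ⟨i₀, hi₀⟩ := hP
      refine ⟨((i₀ : ℕ) + 1) % 2, fun i hi => ?_⟩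
      have := hparity i i₀ (hdeg3 i hi) (hdeg3 i₀ hi₀)
      omega
    · exact ⟨0, fun i hi => absurd ⟨i, hi⟩ hP⟩
  -- the eigenvector
  set X : V → ℝ := fun w =>
    if h : ∃ i : Fin g, c i = w then bsSign ((h.choose : ℕ) + t)
    else if h2 : ∃ i : Fin g, G.Adj w (c i) then -(bsSign ((h2.choose : ℕ) + t)) else 0
    with hXdef
  have hXc : ∀ i : Fin g, X (c i) = bsSign ((i : ℕ) + t) := by
    intro i
    have h : ∃ i' : Fin g, c i' = c i := ⟨i, rfl⟩
    rw [hXdef]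
    dsimp only
    rw [dif_pos h, hinj h.choose_spec]
  have hXp : ∀ w, w ∉ Set.range c → ∀ j : Fin g, G.Adj w (c j) →
      X w = -(bsSign ((j : ℕ) + t)) := by
    intro w hw j hj
    have h1 : ¬ ∃ i : Fin g, c i = w := fun ⟨i, hi⟩ => hw ⟨i, hi⟩
    have h2 : ∃ i : Fin g, G.Adj w (c i) := ⟨j, hj⟩
    rw [hXdef]
    dsimp only
    rw [dif_neg h1, dif_pos h2]
    obtain ⟨w', hw', huw⟩ := hpend w hw
    have e1 : c h2.choose = c j := (huw _ h2.choose_spec).trans (huw _ hj).symm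
    rw [hinj e1]
  have hXne : X ≠ 0 := by
    intro h0
    have hi : ((4 - t % 4) % 4 : ℕ) < g := by omega
    have h1 : X (c ⟨(4 - t % 4) % 4, hi⟩) = 1 := by
      rw [hXc]
      unfold bsSign
      rw [if_pos (show (((⟨(4 - t % 4) % 4, hi⟩ : Fin g) : ℕ) + t) % 4 = 0 by
        simp only [Fin.val_mk]; omega)]
    have h2 := congrFun h0 (c ⟨(4 - t % 4) % 4, hi⟩)
    rw [h1] at h2
    simp at h2
  have hkeysum : ∀ i : Fin g, X (c (i + one)) + X (c (i - one)) = 0 := by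
    intro i
    rw [hXc, hXc]
    set j := ((i - one : Fin g) : ℕ) with hjdef
    have hj : (j + 1) % g = (i : ℕ) := hprev i
    have e1 : ((i + one : Fin g) : ℕ) % 4 = ((i : ℕ) + 1) % 4 := by
      rw [hval_add]
      exact Nat.mod_mod_of_dvd _ hdvd
    have e2 : (j + 1) % 4 = (i : ℕ) % 4 := by
      rw [← Nat.mod_mod_of_dvd (j + 1) hdvd, hj]
    have h4 : (((i + one : Fin g) : ℕ) + t) % 4 = ((j + t) + 2) % 4 := by omega
    rw [bsSign_congr h4, add_comm]
    exact bsSign_add_two (j + t)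
  -- conclusion
  refine ⟨X, hXne, ?_⟩
  have hsum : ∀ x : V, (∑ y, if G.Adj x y then X x - X y else 0)
      = ∑ y ∈ G.neighborFinset x, (X x - X y) := by
    intro x
    rw [SimpleGraph.neighborFinset_eq_filter, Finset.sum_filter]
  intro x
  by_cases hx : x ∈ Set.range c
  · obtain ⟨i, rfl⟩ := hx
    by_cases hp : ∃ p, p ∉ Set.range c ∧ G.Adj p (c i)
    · obtain ⟨p, hp1, hp2⟩ := hp
      rw [hsum, hnb3 i p hp1 hp2,
        Finset.sum_insert (by simp [hpne p hp1]),
        Finset.sum_insert (by simp [hcne i]), Finset.sum_singleton]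
      have h0 : X (c i) = 0 := by
        rw [hXc]
        exact bsSign_odd (ht i ⟨p, hp1, hp2⟩)
      have hXpv : X p = 0 := by
        rw [hXp p hp1 i hp2, bsSign_odd (ht i ⟨p, hp1, hp2⟩), neg_zero]
      have hk := hkeysum i
      rw [h0, hXpv]
      linarith [hkeysum i]
    · rw [hsum, hnb2 i hp, Finset.sum_insert (by simp [hcne i]), Finset.sum_singleton]
      linarith [hkeysum i]
  · obtain ⟨w', hw', huw⟩ := hpend x hx
    obtain ⟨j, hj⟩ := hpendr x hx w' hw'
    have hxadj : G.Adj x (c j) := by rwa [hj]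
    have hnbx : G.neighborFinset x = {c j} := by
      ext y
      rw [SimpleGraph.mem_neighborFinset, Finset.mem_singleton]
      constructor
      · intro h
        exact (huw y h).trans ((huw (c j) hxadj).symm)
      · rintro rfl
        exact hxadj
    rw [hsum, hnbx, Finset.sum_singleton, hXp x hx j hxadj, hXc]
    ring

section glue
variable {V₁ V₂ : Type*} (G₁ : SimpleGraph V₁) (G₂ : SimpleGraph V₂) (u : V₁) (v : V₂)

lemma oneEdgeConn_adj_ll (a b : V₁) :
    (oneEdgeConn G₁ G₂ u v).Adj (Sum.inl a) (Sum.inl b) ↔ G₁.Adj a b := by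
  rw [oneEdgeConn, SimpleGraph.fromRel_adj]
  constructor
  · rintro ⟨hne, h | h⟩
    exacts [h, h.symm]
  · intro h
    exact ⟨fun he => G₁.ne_of_adj h (Sum.inl.inj he), Or.inl h⟩

lemma oneEdgeConn_adj_rr (a b : V₂) :
    (oneEdgeConn G₁ G₂ u v).Adj (Sum.inr a) (Sum.inr b) ↔ G₂.Adj a b := by
  rw [oneEdgeConn, SimpleGraph.fromRel_adj]
  constructor
  · rintro ⟨hne, h | h⟩
    exacts [h, h.symm]
  · intro h
    exact ⟨fun he => G₂.ne_of_adj h (Sum.inr.inj he), Or.inl h⟩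

lemma oneEdgeConn_adj_lr (a : V₁) (b : V₂) :
    (oneEdgeConn G₁ G₂ u v).Adj (Sum.inl a) (Sum.inr b) ↔ (a = u ∧ b = v) := by
  rw [oneEdgeConn, SimpleGraph.fromRel_adj]
  constructor
  · rintro ⟨hne, h | h⟩
    exacts [h, h.elim]
  · intro h
    exact ⟨fun he => Sum.inl_ne_inr he, Or.inl h⟩

lemma oneEdgeConn_adj_rl (a : V₂) (b : V₁) :
    (oneEdgeConn G₁ G₂ u v).Adj (Sum.inr a) (Sum.inl b) ↔ (b = u ∧ a = v) := by
  rw [oneEdgeConn, SimpleGraph.fromRel_adj]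
  constructor
  · rintro ⟨hne, h | h⟩
    exacts [h.elim, h]
  · intro h
    exact ⟨fun he => Sum.inr_ne_inl he, Or.inr h⟩

end glue

lemma oneEdgeConn_glue
    {V₁ V₂ : Type*} [Fintype V₁] [Fintype V₂] [DecidableEq V₁] [DecidableEq V₂]
    (G₁ : SimpleGraph V₁) (G₂ : SimpleGraph V₂)
    [DecidableRel G₁.Adj] [DecidableRel G₂.Adj]
    (X₁ : V₁ → ℝ) (X₂ : V₂ → ℝ) (hX₁ne : X₁ ≠ 0) (hX₂ne : X₂ ≠ 0)
    (hX₁ : ∀ x : V₁, (∑ y, if G₁.Adj x y then X₁ x - X₁ y else 0) = 2 * X₁ x)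
    (hX₂ : ∀ x : V₂, (∑ y, if G₂.Adj x y then X₂ x - X₂ y else 0) = 2 * X₂ x)
    (u : V₁) (v : V₂) :
    ∃ X : (V₁ ⊕ V₂) → ℝ, X ≠ 0 ∧
      ((oneEdgeConn G₁ G₂ u v).lapMatrix ℝ).mulVec X = (2 : ℝ) • X := by
  have main : ∀ (α β : ℝ), α * X₁ u = β * X₂ v →
      ((oneEdgeConn G₁ G₂ u v).lapMatrix ℝ).mulVec (Sum.elim (α • X₁) (β • X₂)) =
        (2 : ℝ) • (Sum.elim (α • X₁) (β • X₂)) := by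
    intro α β hc
    funext x
    rw [show ((oneEdgeConn G₁ G₂ u v).lapMatrix ℝ).mulVec (Sum.elim (α • X₁) (β • X₂)) x
        = ((oneEdgeConn G₁ G₂ u v).lapMatrix ℝ *ᵥ (Sum.elim (α • X₁) (β • X₂))) x from rfl,
      lap_mulVec_eq]
    cases x with
    | inl a =>
      rw [Fintype.sum_sum_type]
      have e1 : (∑ b : V₁, if (oneEdgeConn G₁ G₂ u v).Adj (Sum.inl a) (Sum.inl b) then
          Sum.elim (α • X₁) (β • X₂) (Sum.inl a) - Sum.elim (α • X₁) (β • X₂) (Sum.inl b) else 0)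
          = α * (2 * X₁ a) := by
        rw [← hX₁ a, Finset.mul_sum]
        refine Finset.sum_congr rfl fun b _ => ?_
        rw [if_congr (oneEdgeConn_adj_ll G₁ G₂ u v a b) rfl rfl]
        split
        · simp [mul_sub]
        · simp
      have e2 : (∑ b : V₂, if (oneEdgeConn G₁ G₂ u v).Adj (Sum.inl a) (Sum.inr b) then
          Sum.elim (α • X₁) (β • X₂) (Sum.inl a) - Sum.elim (α • X₁) (β • X₂) (Sum.inr b) else 0)
          = 0 := by
        refine Finset.sum_eq_zero fun b _ => ?_
        by_cases hab : a = u ∧ b = v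
        · rw [if_pos ((oneEdgeConn_adj_lr G₁ G₂ u v a b).mpr hab)]
          obtain ⟨rfl, rfl⟩ := hab
          simp only [Sum.elim_inl, Sum.elim_inr, Pi.smul_apply, smul_eq_mul]
          rw [hc]
          ring
        · rw [if_neg (fun h => hab ((oneEdgeConn_adj_lr G₁ G₂ u v a b).mp h))]
      rw [e1, e2, add_zero]
      simp [smul_eq_mul]
      ring
    | inr a =>
      rw [Fintype.sum_sum_type]
      have e1 : (∑ b : V₂, if (oneEdgeConn G₁ G₂ u v).Adj (Sum.inr a) (Sum.inr b) then
          Sum.elim (α • X₁) (β • X₂) (Sum.inr a) - Sum.elim (α • X₁) (β • X₂) (Sum.inr b) else 0)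
          = β * (2 * X₂ a) := by
        rw [← hX₂ a, Finset.mul_sum]
        refine Finset.sum_congr rfl fun b _ => ?_
        rw [if_congr (oneEdgeConn_adj_rr G₁ G₂ u v a b) rfl rfl]
        split
        · simp [mul_sub]
        · simp
      have e2 : (∑ b : V₁, if (oneEdgeConn G₁ G₂ u v).Adj (Sum.inr a) (Sum.inl b) then
          Sum.elim (α • X₁) (β • X₂) (Sum.inr a) - Sum.elim (α • X₁) (β • X₂) (Sum.inl b) else 0)
          = 0 := by
        refine Finset.sum_eq_zero fun b _ => ?_
        by_cases hab : b = u ∧ a = v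
        · rw [if_pos ((oneEdgeConn_adj_rl G₁ G₂ u v a b).mpr hab)]
          obtain ⟨rfl, rfl⟩ := hab
          simp only [Sum.elim_inl, Sum.elim_inr, Pi.smul_apply, smul_eq_mul]
          rw [hc]
          ring
        · rw [if_neg (fun h => hab ((oneEdgeConn_adj_rl G₁ G₂ u v a b).mp h))]
      rw [e1, e2, zero_add]
      simp [smul_eq_mul]
      ring
  by_cases h : X₁ u = 0
  · refine ⟨Sum.elim ((1:ℝ) • X₁) ((0:ℝ) • X₂), ?_, main 1 0 (by simp [h])⟩
    intro h0
    apply hX₁ne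
    funext a
    have := congrFun h0 (Sum.inl a)
    simpa using this
  · refine ⟨Sum.elim ((X₂ v) • X₁) ((X₁ u) • X₂), ?_, main (X₂ v) (X₁ u) (mul_comm _ _)⟩
    intro h0
    apply hX₂ne
    funext b
    have h1 : X₁ u * X₂ b = 0 := by simpa [smul_eq_mul] using congrFun h0 (Sum.inr b)
    exact (mul_eq_zero.mp h1).resolve_left h

/-- If `G₁, G₂` are broken sun graphs with no perfect matching, with cycle
lengths `g₁ ≡ g₂ ≡ 0 (mod 4)` and an odd number of degree-`2` vertices between any pair of
consecutive degree-`3` vertices along the cycle, then any one-edge connection `G₁ ⊙ G₂` has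
`2` as a Laplacian eigenvalue. -/
theorem brokenSun_oneEdgeConn_eigenvalue_two
    {V₁ V₂ : Type*} [Fintype V₁] [Fintype V₂] [DecidableEq V₁] [DecidableEq V₂]
    (G₁ : SimpleGraph V₁) (G₂ : SimpleGraph V₂)
    [DecidableRel G₁.Adj] [DecidableRel G₂.Adj]
    (g₁ g₂ : ℕ) (hg₁ : 3 ≤ g₁) (hg₂ : 3 ≤ g₂)
    (c₁ : Fin g₁ → V₁) (c₂ : Fin g₂ → V₂)
    (hbs₁ : IsBrokenSunOn G₁ g₁ hg₁ c₁) (hbs₂ : IsBrokenSunOn G₂ g₂ hg₂ c₂)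
    (hnm₁ : ¬ ∃ M : G₁.Subgraph, M.IsPerfectMatching)
    (hnm₂ : ¬ ∃ M : G₂.Subgraph, M.IsPerfectMatching)
    (hg₁4 : g₁ % 4 = 0) (hg₂4 : g₂ % 4 = 0)
    (hgap₁ : OddGapCondition G₁ g₁ hg₁ c₁) (hgap₂ : OddGapCondition G₂ g₂ hg₂ c₂)
    (u : V₁) (v : V₂) :
    ∃ X : (V₁ ⊕ V₂) → ℝ, X ≠ 0 ∧
      ((oneEdgeConn G₁ G₂ u v).lapMatrix ℝ).mulVec X = (2 : ℝ) • X := by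
  obtain ⟨X₁, hX₁ne, hX₁⟩ := brokenSun_exists_eigen G₁ g₁ hg₁ c₁ hbs₁ hg₁4 hgap₁
  obtain ⟨X₂, hX₂ne, hX₂⟩ := brokenSun_exists_eigen G₂ g₂ hg₂ c₂ hbs₂ hg₂4 hgap₂
  exact oneEdgeConn_glue G₁ G₂ X₁ X₂ hX₁ne hX₂ne hX₁ hX₂ u v
end
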